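/- arXiv:1002.4911 — 2 statements merged into one kernel-verified Lean document; each statement's English description precedes it below -/
import Mathlib

section
/- Let 1 < q < ∞ and β > 1. Suppose a measurable function f : D → ℂ can be written f = Σ_n λ_n a_n pointwise almost everywhere on D, where (λ_n) ∈ ℓ¹ and each a_n is a T^{1,q}(γ) β-atom. Then for every α > 1 there exist a sequence (μ_n) ∈ ℓ¹ and T^{1,q}(γ) α-atoms b_n such that f = Σ_n μ_n b_n almost everywhere on D, with Σ_n |μ_n| ≤ C Σ_n |λ_n| for a constant C depending only on α, β, q and the dimension n. -/
open MeasureTheory Metric Set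
open scoped ENNReal

noncomputable section

/-- Euclidean space ℝⁿ. -/
abbrev E (n : ℕ) := EuclideanSpace ℝ (Fin n)

/-- The standard Gaussian measure on ℝⁿ. -/
def gaussianM (n : ℕ) : Measure (E n) :=
  volume.withDensity
    (fun x => ENNReal.ofReal ((2 * Real.pi) ^ (-(n : ℝ) / 2) * Real.exp (-‖x‖ ^ 2 / 2)))

/-- m(x) = min {1, 1/|x|} (with value 1 at x = 0). -/
def mFun {n : ℕ} (x : E n) : ℝ := if ‖x‖ ≤ 1 then 1 else ‖x‖⁻¹

/-- The measure `dt/t` on `(0,∞)`. -/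
def tMeasure : Measure ℝ :=
  (volume.restrict (Set.Ioi (0 : ℝ))).withDensity fun t => ENNReal.ofReal t⁻¹

/-- The admissible region `D = {(x,t) : 0 < t < m(x)}`. -/
def Dset (n : ℕ) : Set (E n × ℝ) := {p | 0 < p.2 ∧ p.2 < mFun p.1}

/-- The measure `dγ(y) dt/t` on `D`. -/
def DMeasure (n : ℕ) : Measure (E n × ℝ) := ((gaussianM n).prod tMeasure).restrict (Dset n)

/-- The tent with aperture `α` over `A`: `{(y,t) : t > 0, d(y, ∁A) ≥ α t}`. -/
def tentSet (n : ℕ) (α : ℝ) (A : Set (E n)) : Set (E n × ℝ) :=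
  {p | 0 < p.2 ∧ α * p.2 ≤ infDist p.1 Aᶜ}

/-- A `T^{1,q}(γ)` `α`-atom: a measurable function supported in `T_1(B) ∩ D` for some
ball `B ∈ 𝓑_α`, with `‖a‖_{L^q(D, dγ dt/t)} ≤ γ(B)^{-1/q'}` where `1/q' = 1 - 1/q`. -/
def IsTAtom (n : ℕ) (q α : ℝ) (a : E n × ℝ → ℂ) : Prop :=
  Measurable a ∧
  ∃ (c : E n) (r : ℝ), 0 ≤ r ∧ r ≤ α * mFun c ∧
    (∀ p, p ∉ tentSet n 1 (ball c r) ∩ Dset n → a p = 0) ∧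
    (∫⁻ p, (‖a p‖₊ : ℝ≥0∞) ^ q ∂(DMeasure n)) ^ (1 / q) ≤
      gaussianM n (ball c r) ^ (-(1 - 1 / q))

lemma mFun_eq {n : ℕ} (x : E n) : mFun x = (max 1 ‖x‖)⁻¹ := by
  unfold mFun
  rcases le_or_gt ‖x‖ 1 with h | h
  · simp [h, max_eq_left h]
  · rw [if_neg (not_le.mpr h), max_eq_right h.le]

lemma mFun_pos {n : ℕ} (x : E n) : 0 < mFun x := by
  rw [mFun_eq]; positivity

lemma mFun_le_one {n : ℕ} (x : E n) : mFun x ≤ 1 := by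
  rw [mFun_eq]
  rw [inv_le_one_iff₀]; right; exact le_max_left _ _

lemma norm_mul_mFun_le_one {n : ℕ} (x : E n) : ‖x‖ * mFun x ≤ 1 := by
  rw [mFun_eq]
  rw [mul_inv_le_iff₀ (by positivity), one_mul]
  exact le_max_right _ _

lemma mFun_lipschitz {n : ℕ} (x y : E n) : mFun x ≤ mFun y + dist x y := by
  rw [mFun_eq, mFun_eq]
  set a := max 1 ‖x‖ with ha
  set b := max 1 ‖y‖ with hb
  have h1 : (1:ℝ) ≤ a := le_max_left _ _
  have h2 : (1:ℝ) ≤ b := le_max_left _ _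
  have key : b ≤ a + dist x y := by
    rcases le_total ‖y‖ 1 with h | h
    · rw [hb, max_eq_left h]
      have : (0:ℝ) ≤ dist x y := dist_nonneg
      linarith
    · rw [hb, max_eq_right h]
      have h3 : ‖y‖ ≤ ‖x‖ + dist x y := by
        have := norm_sub_norm_le y x
        rw [← dist_eq_norm, dist_comm] at this
        linarith
      have h4 : ‖x‖ ≤ a := le_max_right _ _
      linarith
  have hd : (0:ℝ) ≤ dist x y := dist_nonneg
  rw [inv_le_iff_one_le_mul₀ (by linarith)]
  have hab : (0:ℝ) ≤ (a * b - 1) * dist x y := mul_nonneg (by nlinarith) hd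
  have : b ≤ a + a * b * dist x y := by nlinarith
  calc (1:ℝ) = b * b⁻¹ := by field_simp
    _ ≤ (a + a * b * dist x y) * b⁻¹ := by gcongr
    _ = (b⁻¹ + dist x y) * a := by field_simp

lemma mFun_comp {n : ℕ} (c y : E n) (L : ℝ) (hL : 0 ≤ L) (h : dist y c ≤ L) :
    mFun c ≤ (1 + L) * mFun y := by
  rw [mFun_eq, mFun_eq]
  set a := max 1 ‖c‖ with ha
  set b := max 1 ‖y‖ with hb
  have h1 : (1:ℝ) ≤ a := le_max_left _ _
  have h2 : (1:ℝ) ≤ b := le_max_left _ _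
  have key : b ≤ (1 + L) * a := by
    have hb' : b ≤ a + L := by
      rcases le_total ‖y‖ 1 with hy | hy
      · rw [hb, max_eq_left hy]; linarith
      · rw [hb, max_eq_right hy]
        have h3 : ‖y‖ ≤ ‖c‖ + L := by
          have := norm_sub_norm_le y c
          rw [← dist_eq_norm] at this
          linarith
        have h4 : ‖c‖ ≤ a := le_max_right _ _
        linarith
    nlinarith
  have hbpos : (0:ℝ) < b := by linarith
  have hapos : (0:ℝ) < a := by linarith
  rw [inv_le_iff_one_le_mul₀ hapos]
  calc (1:ℝ) = b⁻¹ * b := by field_simp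
    _ ≤ b⁻¹ * ((1 + L) * a) := by gcongr
    _ = (1 + L) * b⁻¹ * a := by ring

lemma le_infDist' {X : Type*} [MetricSpace X] {x : X} {s : Set X} (hs : s.Nonempty) {d : ℝ}
    (h : ∀ y ∈ s, d ≤ dist x y) : d ≤ infDist x s := by
  rcases le_or_gt d 0 with hd | hd
  · exact hd.trans infDist_nonneg
  · have h1 : ENNReal.ofReal d ≤ EMetric.infEdist x s := by
      refine EMetric.le_infEdist.mpr ?_
      intro y hy
      rw [edist_dist]
      exact ENNReal.ofReal_le_ofReal (h y hy)
    have h2 := ENNReal.toReal_mono (Metric.infEdist_ne_top hs) h1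
    rw [ENNReal.toReal_ofReal hd.le] at h2
    exact h2

lemma compl_ball_nonempty {n : ℕ} (hn : 1 ≤ n) (z : E n) (ρ : ℝ) : ((ball z ρ)ᶜ : Set (E n)).Nonempty := by
  set v : E n := EuclideanSpace.single (⟨0, hn⟩ : Fin n) (max ρ 1) with hv
  refine ⟨z + v, ?_⟩
  simp only [mem_compl_iff, mem_ball, not_lt]
  have : dist (z + v) z = ‖v‖ := by
    rw [dist_eq_norm]; congr 1; abel
  rw [this, hv, EuclideanSpace.norm_single]
  rw [Real.norm_eq_abs, abs_of_nonneg (by positivity)]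
  exact le_max_left _ _

lemma le_infDist_compl_ball {n : ℕ} (hn : 1 ≤ n) {x z : E n} {ρ t : ℝ}
    (h : t ≤ ρ - dist x z) : t ≤ infDist x (ball z ρ)ᶜ := by
  refine le_trans h (le_infDist' (compl_ball_nonempty hn z ρ) ?_)
  intro y hy
  simp only [mem_compl_iff, mem_ball, not_lt] at hy
  have := dist_triangle z x y
  have h2 : dist y z = dist z y := dist_comm y z
  rw [dist_comm x z] at *
  linarith [dist_comm z y ▸ hy]

/-- The Gaussian density. -/
def gDen (n : ℕ) (x : E n) : ℝ := (2 * Real.pi) ^ (-(n : ℝ) / 2) * Real.exp (-‖x‖ ^ 2 / 2)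

lemma gDen_pos {n : ℕ} (x : E n) : 0 < gDen n x := by
  unfold gDen
  have h2π : (0:ℝ) < 2 * Real.pi := by positivity
  positivity

lemma gDen_continuous (n : ℕ) : Continuous (gDen n) := by
  unfold gDen
  exact continuous_const.mul (Real.continuous_exp.comp (by fun_prop))

lemma gaussianM_apply {n : ℕ} {A : Set (E n)} (hA : MeasurableSet A) :
    gaussianM n A = ∫⁻ x in A, ENNReal.ofReal (gDen n x) ∂volume :=
  withDensity_apply _ hA

lemma gDen_ratio {n : ℕ} {κ : ℝ} (hκ : 0 ≤ κ) {c y : E n} (h : dist y c ≤ κ * mFun c) :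
    gDen n y ≤ Real.exp (4*κ*(1+κ)) * gDen n c ∧
    gDen n c ≤ Real.exp (4*κ*(1+κ)) * gDen n y := by
  have hm1 := mFun_le_one c
  have hm0 := (mFun_pos c).le
  have hcm := norm_mul_mFun_le_one c
  have hyc : ‖y‖ ≤ ‖c‖ + κ * mFun c := by
    have := norm_sub_norm_le y c
    rw [← dist_eq_norm] at this; linarith
  have hcy : ‖c‖ ≤ ‖y‖ + κ * mFun c := by
    have := norm_sub_norm_le c y
    rw [← dist_eq_norm, dist_comm] at this; linarith
  have hm2 : mFun c ^ 2 ≤ 1 := by nlinarith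
  have hym : ‖y‖ * mFun c ≤ 1 + κ := by nlinarith
  have h1 : ‖c‖ ^ 2 ≤ ‖y‖ ^ 2 + 8 * κ * (1 + κ) := by
    nlinarith [pow_le_pow_left₀ (norm_nonneg c) hcy 2,
      mul_le_mul_of_nonneg_left hym (by positivity : (0:ℝ) ≤ 2*κ),
      mul_le_mul_of_nonneg_left hm2 (by positivity : (0:ℝ) ≤ κ^2), norm_nonneg y]
  have h2 : ‖y‖ ^ 2 ≤ ‖c‖ ^ 2 + 8 * κ * (1 + κ) := by
    nlinarith [pow_le_pow_left₀ (norm_nonneg y) hyc 2,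
      mul_le_mul_of_nonneg_left hcm (by positivity : (0:ℝ) ≤ 2*κ),
      mul_le_mul_of_nonneg_left hm2 (by positivity : (0:ℝ) ≤ κ^2), norm_nonneg c]
  have hC : (0:ℝ) < (2 * Real.pi) ^ (-(n : ℝ) / 2) := by
    have : (0:ℝ) < 2 * Real.pi := by positivity
    positivity
  constructor
  · unfold gDen
    rw [mul_comm (Real.exp _), mul_assoc, ← Real.exp_add]
    have : Real.exp (-‖y‖^2/2) ≤ Real.exp (-‖c‖^2/2 + 4*κ*(1+κ)) :=
      Real.exp_le_exp.mpr (by linarith)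
    calc _ ≤ (2 * Real.pi) ^ (-(n : ℝ) / 2) * Real.exp (-‖c‖^2/2 + 4*κ*(1+κ)) := by
          exact mul_le_mul_of_nonneg_left this hC.le
      _ = _ := by rw [add_comm]
  · unfold gDen
    rw [mul_comm (Real.exp _), mul_assoc, ← Real.exp_add]
    have : Real.exp (-‖c‖^2/2) ≤ Real.exp (-‖y‖^2/2 + 4*κ*(1+κ)) :=
      Real.exp_le_exp.mpr (by linarith)
    calc _ ≤ (2 * Real.pi) ^ (-(n : ℝ) / 2) * Real.exp (-‖y‖^2/2 + 4*κ*(1+κ)) := by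
          exact mul_le_mul_of_nonneg_left this hC.le
      _ = _ := by rw [add_comm]

lemma gaussian_ball_upper {n : ℕ} (hn : 1 ≤ n) {κ : ℝ} (hκ : 0 ≤ κ) {c : E n} {ρ : ℝ}
    (hρ0 : 0 ≤ ρ) (hρ : ρ ≤ κ * mFun c) :
    gaussianM n (ball c ρ) ≤
      ENNReal.ofReal (Real.exp (4*κ*(1+κ)) * gDen n c * ρ^n) * volume (ball (0 : E n) 1) := by
  haveI : Nontrivial (E n) := Module.nontrivial_of_finrank_pos
    (by rw [finrank_euclideanSpace_fin]; omega)
  rw [gaussianM_apply measurableSet_ball]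
  have hpt : ∀ x ∈ ball c ρ, ENNReal.ofReal (gDen n x) ≤
      ENNReal.ofReal (Real.exp (4*κ*(1+κ)) * gDen n c) := by
    intro x hx
    apply ENNReal.ofReal_le_ofReal
    exact (gDen_ratio hκ (le_trans (mem_ball.mp hx).le hρ)).1
  calc ∫⁻ x in ball c ρ, ENNReal.ofReal (gDen n x) ∂volume
      ≤ ∫⁻ _ in ball c ρ, ENNReal.ofReal (Real.exp (4*κ*(1+κ)) * gDen n c) ∂volume :=
        setLIntegral_mono measurable_const hpt
    _ = ENNReal.ofReal (Real.exp (4*κ*(1+κ)) * gDen n c) * volume (ball c ρ) :=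
        setLIntegral_const _ _
    _ = _ := by
        rw [Measure.addHaar_ball volume c hρ0, finrank_euclideanSpace_fin, ← mul_assoc,
          ← ENNReal.ofReal_mul (mul_nonneg (Real.exp_pos _).le (gDen_pos _).le)]

lemma gaussian_ball_lower {n : ℕ} (hn : 1 ≤ n) {κ : ℝ} (hκ : 0 ≤ κ) {c : E n} {ρ : ℝ}
    (hρ0 : 0 ≤ ρ) (hρ : ρ ≤ κ * mFun c) :
    ENNReal.ofReal ((Real.exp (4*κ*(1+κ)))⁻¹ * gDen n c * ρ^n) * volume (ball (0 : E n) 1)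
      ≤ gaussianM n (ball c ρ) := by
  haveI : Nontrivial (E n) := Module.nontrivial_of_finrank_pos
    (by rw [finrank_euclideanSpace_fin]; omega)
  rw [gaussianM_apply measurableSet_ball]
  have hpt : ∀ x ∈ ball c ρ, ENNReal.ofReal ((Real.exp (4*κ*(1+κ)))⁻¹ * gDen n c) ≤
      ENNReal.ofReal (gDen n x) := by
    intro x hx
    apply ENNReal.ofReal_le_ofReal
    have h2 := (gDen_ratio hκ (le_trans (mem_ball.mp hx).le hρ)).2
    have hE : (0:ℝ) < Real.exp (4*κ*(1+κ)) := Real.exp_pos _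
    rw [inv_mul_le_iff₀ hE]
    linarith
  calc ENNReal.ofReal ((Real.exp (4*κ*(1+κ)))⁻¹ * gDen n c * ρ^n) * volume (ball (0 : E n) 1)
      = ENNReal.ofReal ((Real.exp (4*κ*(1+κ)))⁻¹ * gDen n c) * volume (ball c ρ) := by
        rw [Measure.addHaar_ball volume c hρ0, finrank_euclideanSpace_fin, ← mul_assoc,
          ← ENNReal.ofReal_mul (mul_nonneg (inv_nonneg.mpr (Real.exp_pos _).le) (gDen_pos _).le)]
    _ = ∫⁻ _ in ball c ρ, ENNReal.ofReal ((Real.exp (4*κ*(1+κ)))⁻¹ * gDen n c) ∂volume :=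
        (setLIntegral_const _ _).symm
    _ ≤ _ := setLIntegral_mono ((ENNReal.measurable_ofReal.comp (gDen_continuous n).measurable)) hpt

lemma exists_net (n : ℕ) (K : ℝ) (hK : 0 < K) :
    ∃ (N : ℕ) (z : Fin N → E n), 0 < N ∧ (∀ i, ‖z i‖ ≤ K) ∧
      Metric.closedBall (0 : E n) K ⊆ ⋃ i, ball (z i) 1 := by
  have hcomp : IsCompact (Metric.closedBall (0 : E n) K) := isCompact_closedBall _ _
  have hcov : Metric.closedBall (0 : E n) K ⊆
      ⋃ w : ↥(Metric.closedBall (0 : E n) K), ball (w : E n) 1 := by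
    intro x hx
    exact mem_iUnion.mpr ⟨⟨x, hx⟩, mem_ball_self one_pos⟩
  obtain ⟨t, ht⟩ := hcomp.elim_finite_subcover _ (fun w => isOpen_ball) hcov
  set l := t.toList with hl
  refine ⟨l.length, fun i => (l.get i : E n), ?_, ?_, ?_⟩
  · have h0 : (0 : E n) ∈ Metric.closedBall (0 : E n) K := by
      simp [hK.le]
    have := ht h0
    rw [mem_iUnion₂] at this
    obtain ⟨w, hw, -⟩ := this
    have : l ≠ [] := by
      intro h
      have ht0 : t = ∅ := Finset.toList_eq_nil.mp (hl ▸ h)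
      rw [ht0] at hw
      exact Finset.notMem_empty w hw
    exact List.length_pos_iff.mpr this
  · intro i
    have h2 : ((l.get i : ↥(Metric.closedBall (0 : E n) K)) : E n) ∈ Metric.closedBall (0 : E n) K :=
      (l.get i).2
    rw [mem_closedBall, dist_zero_right] at h2
    exact h2
  · intro x hx
    have := ht hx
    rw [mem_iUnion₂] at this
    obtain ⟨w, hw, hxw⟩ := this
    rw [← Finset.mem_toList, List.mem_iff_get] at hw
    obtain ⟨i, hi⟩ := hw
    refine mem_iUnion.mpr ⟨i, ?_⟩
    simp only [hl]
    rw [hi]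
    exact hxw

lemma zero_atom (n : ℕ) (q α : ℝ) (hq : 0 < q) (hα : 0 ≤ α) :
    IsTAtom n q α (fun _ => (0 : ℂ)) := by
  refine ⟨measurable_const, 0, 0, le_refl _, mul_nonneg hα (mFun_pos 0).le, fun p _ => rfl, ?_⟩
  have h0 : (∫⁻ p : E n × ℝ, (‖(0:ℂ)‖₊ : ℝ≥0∞) ^ q ∂(DMeasure n)) = 0 := by
    have : ∀ p : E n × ℝ, (‖(0:ℂ)‖₊ : ℝ≥0∞) ^ q = 0 := fun p => by
      rw [nnnorm_zero, ENNReal.coe_zero, ENNReal.zero_rpow_of_pos hq]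
    rw [lintegral_congr this, lintegral_zero]
  rw [h0, ENNReal.zero_rpow_of_pos (by positivity)]
  exact zero_le

set_option maxHeartbeats 2000000 in
lemma atom_decomp (n : ℕ) (hn : 1 ≤ n) (q : ℝ) (hq : 1 < q)
    (β : ℝ) (hβ : 1 < β) (α : ℝ) (hα : 1 < α) :
    ∃ (N : ℕ) (C₀ : ℝ), 0 < N ∧ 1 ≤ C₀ ∧ ∀ a : E n × ℝ → ℂ, IsTAtom n q β a →
      ∃ (μ : Fin N → ℝ) (b : Fin N → E n × ℝ → ℂ),
        (∀ i, 0 ≤ μ i) ∧ (∀ i, IsTAtom n q α (b i)) ∧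
        (∀ p, ∑ i, (μ i : ℂ) * b i p = a p) ∧
        (∀ i p, ‖(μ i : ℂ) * b i p‖ ≤ ‖a p‖) ∧ (∑ i, μ i ≤ C₀) := by
  set δ := (α - 1) / 2 with hδ
  have hδpos : 0 < δ := by rw [hδ]; linarith
  set K₀ := β * (1 + β) / δ with hK₀
  have hK₀pos : 0 < K₀ := by rw [hK₀]; positivity
  obtain ⟨N, z, hN, hzK, hcover⟩ := exists_net n K₀ hK₀pos
  set θ := 1 - 1/q with hθ
  have hθpos : 0 < θ := by rw [hθ]; have : 1/q < 1 := by rw [div_lt_one (by linarith)]; linarith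
                           linarith
  set K₁ := Real.exp (4*α*(1+α)) with hK₁
  set K₂ := Real.exp (4*β*(1+β)) with hK₂
  set K₃ := K₁^2 * K₂ * (1+β)^n with hK₃
  have hK₁pos : 0 < K₁ := Real.exp_pos _
  have hK₂pos : 0 < K₂ := Real.exp_pos _
  have hK₃pos : 0 < K₃ := by positivity
  set Cτ : ℝ := max 1 (K₃ ^ θ) with hCτ
  have hCτ1 : 1 ≤ Cτ := le_max_left _ _
  have hN1 : (1:ℝ) ≤ (N:ℝ) := by exact_mod_cast hN
  refine ⟨N, N * Cτ + 1, hN, by nlinarith, ?_⟩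
  rintro a ⟨ha_meas, c, r, hr0, hrβ, hsupp, hnorm⟩
  by_cases hgood : r ≤ α * mFun c
  · -- the atom is already an `α`-atom
    set i0 : Fin N := ⟨0, hN⟩ with hi0
    refine ⟨fun i => if i = i0 then 1 else 0, fun i => if i = i0 then a else (fun _ => 0),
      ?_, ?_, ?_, ?_, ?_⟩
    · intro i; dsimp only; split <;> norm_num
    · intro i
      by_cases h : i = i0
      · simp only [h, if_pos rfl]
        exact ⟨ha_meas, c, r, hr0, hgood, hsupp, hnorm⟩
      · simp only [if_neg h]
        exact zero_atom n q α (by linarith) (by linarith)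
    · intro p
      rw [Finset.sum_eq_single i0]
      · simp
      · intro i _ h; simp [if_neg h]
      · intro h; exact absurd (Finset.mem_univ i0) h
    · intro i p
      by_cases h : i = i0
      · simp [h]
      · simp [if_neg h]
    · rw [Finset.sum_eq_single i0]
      · have : (0:ℝ) ≤ (N:ℝ) * Cτ := by positivity
        simp; linarith
      · intro i _ h; simp [if_neg h]
      · intro h; exact absurd (Finset.mem_univ i0) h
  · -- bad case : `α * mFun c < r ≤ β * mFun c`
    push_neg at hgood
    have hmc := mFun_pos c
    have hmc1 := mFun_le_one c
    have hrpos : 0 < r := lt_trans (by nlinarith) hgood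
    set s : ℝ := δ * mFun c / (1 + β) with hs
    have hspos : 0 < s := div_pos (mul_pos hδpos hmc) (by linarith)
    set y : Fin N → E n := fun i => c + s • z i with hy
    have hdyc : ∀ i, dist (y i) c ≤ β * mFun c := by
      intro i
      have h1 : dist (y i) c = s * ‖z i‖ := by
        rw [hy, dist_eq_norm]
        simp only [add_sub_cancel_left]
        rw [norm_smul, Real.norm_eq_abs, abs_of_pos hspos]
      rw [h1]
      calc s * ‖z i‖ ≤ s * K₀ := mul_le_mul_of_nonneg_left (hzK i) hspos.le
        _ = β * mFun c := by rw [hs, hK₀]; field_simp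
    have hmyc : ∀ i, mFun c ≤ (1+β) * mFun (y i) := fun i =>
      mFun_comp c (y i) β (by linarith) (le_trans (hdyc i) (by nlinarith))
    have hmcy : ∀ i, mFun (y i) ≤ (1+β) * mFun c := fun i =>
      mFun_comp (y i) c β (by linarith)
        (by rw [dist_comm]; exact le_trans (hdyc i) (by nlinarith))
    have hmy : ∀ i, 0 < mFun (y i) := fun i => mFun_pos (y i)
    have hsy : ∀ i, s ≤ δ * mFun (y i) := by
      intro i
      have h1 := hmyc i
      rw [hs, div_le_iff₀ (by linarith : (0:ℝ) < 1 + β)]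
      calc δ * mFun c ≤ δ * ((1+β) * mFun (y i)) := mul_le_mul_of_nonneg_left h1 hδpos.le
        _ = δ * mFun (y i) * (1+β) := by ring
    have hcov : ∀ x ∈ ball c r, ∃ i, x ∈ ball (y i) s := by
      intro x hx
      have hsK : s * K₀ = β * mFun c := by rw [hs, hK₀]; field_simp
      have hw : s⁻¹ • (x - c) ∈ Metric.closedBall (0 : E n) K₀ := by
        rw [mem_closedBall, dist_zero_right, norm_smul, norm_inv, Real.norm_eq_abs,
          abs_of_pos hspos, inv_mul_le_iff₀ hspos]
        rw [mem_ball, dist_eq_norm] at hx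
        calc ‖x - c‖ ≤ β * mFun c := le_trans hx.le hrβ
          _ = s * K₀ := hsK.symm
      obtain ⟨i, hi⟩ := mem_iUnion.mp (hcover hw)
      refine ⟨i, ?_⟩
      rw [mem_ball] at hi ⊢
      have hxy : x - y i = s • (s⁻¹ • (x - c) - z i) := by
        rw [smul_sub, smul_smul, mul_inv_cancel₀ hspos.ne', one_smul, hy]
        simp only []
        abel
      calc dist x (y i) = ‖x - y i‖ := dist_eq_norm _ _
        _ = s * ‖s⁻¹ • (x - c) - z i‖ := by
            rw [hxy, norm_smul, Real.norm_eq_abs, abs_of_pos hspos]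
        _ < s * 1 := by
            apply mul_lt_mul_of_pos_left _ hspos
            rw [dist_eq_norm] at hi
            exact hi
        _ = s := mul_one s
    classical
    set A : Fin N → Set (E n) := fun i => ball (y i) s \ ⋃ (j : Fin N) (_ : j < i), ball (y j) s with hA
    have hAmeas : ∀ i, MeasurableSet (A i) := fun i =>
      measurableSet_ball.diff (MeasurableSet.iUnion fun j => MeasurableSet.iUnion fun _ => measurableSet_ball)
    have hAsub : ∀ i, A i ⊆ ball (y i) s := fun i => diff_subset
    have hAuniq : ∀ x ∈ ball c r, ∃ i, x ∈ A i ∧ ∀ j, j ≠ i → x ∉ A j := by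
      intro x hx
      set P : Finset (Fin N) := Finset.univ.filter (fun i => x ∈ ball (y i) s) with hP
      obtain ⟨i₁, hi₁⟩ := hcov x hx
      have hPne : P.Nonempty := ⟨i₁, by rw [hP]; simp only [Finset.mem_filter, Finset.mem_univ, true_and]; exact hi₁⟩
      set i₀ := P.min' hPne with hi₀
      have hi₀P : i₀ ∈ P := P.min'_mem hPne
      have hxball : x ∈ ball (y i₀) s := by
        rw [hP] at hi₀P
        simpa using hi₀P
      refine ⟨i₀, ⟨hxball, ?_⟩, ?_⟩
      · intro hmem
        rw [mem_iUnion] at hmem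
        obtain ⟨j, hmem⟩ := hmem
        rw [mem_iUnion] at hmem
        obtain ⟨hj, hmem⟩ := hmem
        have hjP : j ∈ P := by rw [hP]; simp only [Finset.mem_filter, Finset.mem_univ, true_and]; exact hmem
        exact absurd (P.min'_le j hjP) (not_le.mpr hj)
      · intro j hj hAj
        rcases lt_or_gt_of_ne hj with h | h
        · have hjP : j ∈ P := by rw [hP]; simp only [Finset.mem_filter, Finset.mem_univ, true_and]; exact hAsub j hAj
          exact absurd (P.min'_le j hjP) (not_le.mpr h)
        · exact hAj.2 (mem_iUnion.mpr ⟨i₀, mem_iUnion.mpr ⟨h, hxball⟩⟩)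
    -- measures of the balls
    set γB := gaussianM n (ball c r) with hγB
    set ρ' : Fin N → ℝ := fun i => α * mFun (y i) with hρ'
    have hρ'pos : ∀ i, 0 < ρ' i := fun i => mul_pos (by linarith) (hmy i)
    set γB' : Fin N → ℝ≥0∞ := fun i => gaussianM n (ball (y i) (ρ' i)) with hγB'
    have hVpos : 0 < volume (ball (0 : E n) 1) := measure_ball_pos _ _ one_pos
    have hVfin : volume (ball (0 : E n) 1) < ⊤ := measure_ball_lt_top
    have hα0 : (0:ℝ) ≤ α := by linarith
    have hβ0 : (0:ℝ) ≤ β := by linarith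
    have hγBlow : ENNReal.ofReal (K₁⁻¹ * gDen n c * (α * mFun c)^n) * volume (ball (0 : E n) 1)
        ≤ γB := by
      refine le_trans ?_ (measure_mono (ball_subset_ball hgood.le))
      exact gaussian_ball_lower hn hα0 (by positivity) (le_refl _)
    have hγBpos : 0 < γB := by
      refine lt_of_lt_of_le ?_ hγBlow
      apply ENNReal.mul_pos _ hVpos.ne'
      refine (ENNReal.ofReal_pos.mpr ?_).ne'
      have := gDen_pos (n := n) c
      positivity
    have hγBfin : γB < ⊤ := by
      refine lt_of_le_of_lt (gaussian_ball_upper hn hβ0 hr0 hrβ) ?_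
      exact ENNReal.mul_lt_top ENNReal.ofReal_lt_top hVfin
    have hγB'low : ∀ i, ENNReal.ofReal (K₁⁻¹ * gDen n (y i) * (ρ' i)^n) *
        volume (ball (0 : E n) 1) ≤ γB' i := fun i =>
      gaussian_ball_lower hn hα0 (hρ'pos i).le (le_refl _)
    have hγB'pos : ∀ i, 0 < γB' i := by
      intro i
      refine lt_of_lt_of_le ?_ (hγB'low i)
      apply ENNReal.mul_pos _ hVpos.ne'
      refine (ENNReal.ofReal_pos.mpr ?_).ne'
      have h1 := gDen_pos (y i)
      have h2 := hρ'pos i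
      positivity
    have hγB'fin : ∀ i, γB' i < ⊤ := by
      intro i
      refine lt_of_le_of_lt (gaussian_ball_upper hn hα0 (hρ'pos i).le (le_refl _)) ?_
      exact ENNReal.mul_lt_top ENNReal.ofReal_lt_top hVfin
    have hratio : ∀ i, γB' i ≤ ENNReal.ofReal K₃ * γB := by
      intro i
      have h1 : γB' i ≤ ENNReal.ofReal (K₁ * gDen n (y i) * (ρ' i)^n) *
          volume (ball (0 : E n) 1) := gaussian_ball_upper hn hα0 (hρ'pos i).le (le_refl _)
      have hg := (gDen_ratio hβ0 (hdyc i)).1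
      have hρlin : ρ' i ≤ (1+β) * (α * mFun c) := by
        rw [hρ']
        calc α * mFun (y i) ≤ α * ((1+β) * mFun c) :=
              mul_le_mul_of_nonneg_left (hmcy i) hα0
          _ = (1+β) * (α * mFun c) := by ring
      have hρn : (ρ' i)^n ≤ (1+β)^n * (α * mFun c)^n := by
        calc (ρ' i)^n ≤ ((1+β) * (α * mFun c))^n :=
              pow_le_pow_left₀ (hρ'pos i).le hρlin n
          _ = (1+β)^n * (α * mFun c)^n := mul_pow _ _ _
      have h2 : K₁ * gDen n (y i) * (ρ' i)^n ≤ K₃ * (K₁⁻¹ * gDen n c * (α * mFun c)^n) := by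
        have e1 : K₁ * gDen n (y i) * (ρ' i)^n ≤ K₁ * (K₂ * gDen n c) * ((1+β)^n * (α * mFun c)^n) := by
          have hgy := gDen_pos (y i)
          have hgc := gDen_pos (n := n) c
          apply mul_le_mul
          · exact mul_le_mul_of_nonneg_left hg hK₁pos.le
          · exact hρn
          · exact pow_nonneg (hρ'pos i).le n
          · exact mul_nonneg hK₁pos.le (mul_nonneg hK₂pos.le hgc.le)
        refine le_trans e1 (le_of_eq ?_)
        rw [hK₃]
        field_simp
      calc γB' i ≤ ENNReal.ofReal (K₁ * gDen n (y i) * (ρ' i)^n) * volume (ball (0 : E n) 1) := h1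
        _ ≤ ENNReal.ofReal (K₃ * (K₁⁻¹ * gDen n c * (α * mFun c)^n)) * volume (ball (0 : E n) 1) :=
            mul_le_mul_left (ENNReal.ofReal_le_ofReal h2) _
        _ = ENNReal.ofReal K₃ *
            (ENNReal.ofReal (K₁⁻¹ * gDen n c * (α * mFun c)^n) * volume (ball (0 : E n) 1)) := by
            rw [ENNReal.ofReal_mul hK₃pos.le, mul_assoc]
        _ ≤ ENNReal.ofReal K₃ * γB := mul_le_mul_right hγBlow _
    -- scaling factors
    set τ : Fin N → ℝ≥0∞ := fun i => max 1 (γB' i ^ θ * (γB ^ θ)⁻¹) with hτ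
    have hγBθ0 : γB ^ θ ≠ 0 := (ENNReal.rpow_pos hγBpos hγBfin.ne).ne'
    have hγBθfin : γB ^ θ ≠ ⊤ := ENNReal.rpow_ne_top_of_nonneg hθpos.le hγBfin.ne
    have hτ1 : ∀ i, 1 ≤ τ i := fun i => le_max_left _ _
    have hτle : ∀ i, τ i ≤ ENNReal.ofReal Cτ := by
      intro i
      have hr1 : γB' i ^ θ * (γB ^ θ)⁻¹ ≤ ENNReal.ofReal (K₃ ^ θ) := by
        calc γB' i ^ θ * (γB ^ θ)⁻¹ ≤ (ENNReal.ofReal K₃ * γB) ^ θ * (γB ^ θ)⁻¹ :=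
              mul_le_mul_left (ENNReal.rpow_le_rpow (hratio i) hθpos.le) _
          _ = ENNReal.ofReal K₃ ^ θ * (γB ^ θ * (γB ^ θ)⁻¹) := by
              rw [ENNReal.mul_rpow_of_nonneg _ _ hθpos.le, mul_assoc]
          _ = ENNReal.ofReal K₃ ^ θ := by
              rw [ENNReal.mul_inv_cancel hγBθ0 hγBθfin, mul_one]
          _ = ENNReal.ofReal (K₃ ^ θ) := ENNReal.ofReal_rpow_of_nonneg hK₃pos.le hθpos.le
      rw [hτ]
      apply max_le
      · rw [← ENNReal.ofReal_one]; exact ENNReal.ofReal_le_ofReal hCτ1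
      · exact le_trans hr1 (ENNReal.ofReal_le_ofReal (le_max_right _ _))
    have hτfin : ∀ i, τ i ≠ ⊤ := fun i => (lt_of_le_of_lt (hτle i) ENNReal.ofReal_lt_top).ne
    have hτ0 : ∀ i, τ i ≠ 0 := fun i => (lt_of_lt_of_le one_pos (hτ1 i)).ne'
    set t : Fin N → ℝ := fun i => (τ i).toReal with ht
    have ht1 : ∀ i, 1 ≤ t i := by
      intro i
      have h2 := ENNReal.toReal_mono (hτfin i) (hτ1 i)
      simpa using h2
    have htpos : ∀ i, 0 < t i := fun i => lt_of_lt_of_le one_pos (ht1 i)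
    have htle : ∀ i, t i ≤ Cτ := fun i =>
      ENNReal.toReal_le_of_le_ofReal (le_trans zero_le_one hCτ1) (hτle i)
    have hτkey : ∀ i, (τ i)⁻¹ * γB ^ (-θ) ≤ γB' i ^ (-θ) := by
      intro i
      rw [ENNReal.rpow_neg, ENNReal.rpow_neg]
      have h1 : (τ i)⁻¹ * (γB ^ θ)⁻¹ = (τ i * γB ^ θ)⁻¹ :=
        (ENNReal.mul_inv (Or.inl (hτ0 i)) (Or.inl (hτfin i))).symm
      rw [h1, ENNReal.inv_le_inv]
      calc γB' i ^ θ = γB' i ^ θ * (γB ^ θ)⁻¹ * γB ^ θ := by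
            rw [mul_assoc, ENNReal.inv_mul_cancel hγBθ0 hγBθfin, mul_one]
        _ ≤ τ i * γB ^ θ := mul_le_mul_left (le_max_right _ _) _
    have hq0 : (0:ℝ) < q := by linarith
    have hanorm_meas : Measurable fun p => (‖a p‖₊ : ℝ≥0∞) ^ q :=
      (ha_meas.nnnorm.coe_nnreal_ennreal).pow_const q
    refine ⟨t, fun i p => if p.1 ∈ A i then (((t i)⁻¹ : ℝ) : ℂ) * a p else 0,
      fun i => (htpos i).le, ?_, ?_, ?_, ?_⟩
    · -- each piece is an α-atom
      intro i
      refine ⟨?_, y i, ρ' i, (hρ'pos i).le, le_refl _, ?_, ?_⟩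
      · exact Measurable.ite ((hAmeas i).preimage measurable_fst)
          (measurable_const.mul ha_meas) measurable_const
      · intro p hp
        dsimp only
        by_cases hpA : p.1 ∈ A i
        · rw [if_pos hpA]
          rcases eq_or_ne (a p) 0 with h0 | h0
          · rw [h0, mul_zero]
          · exfalso
            have hpin : p ∈ tentSet n 1 (ball c r) ∩ Dset n := by
              by_contra hc; exact h0 (hsupp p hc)
            apply hp
            refine ⟨⟨hpin.2.1, ?_⟩, hpin.2⟩
            rw [one_mul]
            apply le_infDist_compl_ball hn
            have hd : dist p.1 (y i) < s := mem_ball.mp (hAsub i hpA)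
            have hds := hsy i
            have hlip := mFun_lipschitz p.1 (y i)
            have hpm : p.2 < mFun p.1 := hpin.2.2
            have hmyi := hmy i
            rw [hρ']
            dsimp only
            rw [hδ] at hds
            linarith
        · rw [if_neg hpA]
      · -- norm bound
        have hpt : ∀ p : E n × ℝ,
            (‖(if p.1 ∈ A i then (((t i)⁻¹ : ℝ) : ℂ) * a p else 0)‖₊ : ℝ≥0∞) ^ q
            ≤ (τ i)⁻¹ ^ q * (‖a p‖₊ : ℝ≥0∞) ^ q := by
          intro p
          by_cases hpA : p.1 ∈ A i
          · rw [if_pos hpA, nnnorm_mul, ENNReal.coe_mul,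
              ENNReal.mul_rpow_of_nonneg _ _ hq0.le]
            apply mul_le_mul_left
            apply ENNReal.rpow_le_rpow _ hq0.le
            have he : (‖(((t i)⁻¹ : ℝ) : ℂ)‖₊ : ℝ≥0∞) = ENNReal.ofReal ((t i)⁻¹) := by
              rw [Complex.nnnorm_real, ← enorm_eq_nnnorm, Real.enorm_eq_ofReal (inv_nonneg.mpr (htpos i).le)]
            rw [he, ht]
            dsimp only
            rw [← ENNReal.toReal_inv, ENNReal.ofReal_toReal (ENNReal.inv_ne_top.mpr (hτ0 i))]
          · rw [if_neg hpA, nnnorm_zero, ENNReal.coe_zero, ENNReal.zero_rpow_of_pos hq0]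
            exact zero_le
        have hstep : (∫⁻ p, (‖(if p.1 ∈ A i then (((t i)⁻¹ : ℝ) : ℂ) * a p else 0)‖₊ : ℝ≥0∞) ^ q
              ∂(DMeasure n)) ≤ (τ i)⁻¹ ^ q * ∫⁻ p, (‖a p‖₊ : ℝ≥0∞) ^ q ∂(DMeasure n) := by
          calc _ ≤ ∫⁻ p, (τ i)⁻¹ ^ q * (‖a p‖₊ : ℝ≥0∞) ^ q ∂(DMeasure n) := lintegral_mono hpt
            _ = _ := lintegral_const_mul _ hanorm_meas
        calc (∫⁻ p, (‖(if p.1 ∈ A i then (((t i)⁻¹ : ℝ) : ℂ) * a p else 0)‖₊ : ℝ≥0∞) ^ q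
              ∂(DMeasure n)) ^ (1/q)
            ≤ ((τ i)⁻¹ ^ q * ∫⁻ p, (‖a p‖₊ : ℝ≥0∞) ^ q ∂(DMeasure n)) ^ (1/q) :=
              ENNReal.rpow_le_rpow hstep (by positivity)
          _ = (τ i)⁻¹ * (∫⁻ p, (‖a p‖₊ : ℝ≥0∞) ^ q ∂(DMeasure n)) ^ (1/q) := by
              rw [ENNReal.mul_rpow_of_nonneg _ _ (by positivity : (0:ℝ) ≤ 1/q),
                ← ENNReal.rpow_mul, mul_one_div_cancel hq0.ne', ENNReal.rpow_one]
          _ ≤ (τ i)⁻¹ * γB ^ (-(1 - 1/q)) := mul_le_mul_right hnorm _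
          _ ≤ γB' i ^ (-(1 - 1/q)) := hτkey i
    · -- pieces sum back to the atom
      intro p
      dsimp only
      rcases eq_or_ne (a p) 0 with h0 | h0
      · rw [h0]
        apply Finset.sum_eq_zero
        intro i _
        by_cases hpA : p.1 ∈ A i
        · rw [if_pos hpA, mul_zero, mul_zero]
        · rw [if_neg hpA, mul_zero]
      · have hpin : p ∈ tentSet n 1 (ball c r) ∩ Dset n := by
          by_contra hc; exact h0 (hsupp p hc)
        have hpball : p.1 ∈ ball c r := by
          by_contra hpb
          have h1 : infDist p.1 (ball c r)ᶜ = 0 := infDist_zero_of_mem hpb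
          have h2 := hpin.1.2
          have h3 := hpin.1.1
          rw [one_mul, h1] at h2
          exact absurd h2 (not_le.mpr h3)
        obtain ⟨i₀, hi₀A, hi₀uniq⟩ := hAuniq p.1 hpball
        rw [Finset.sum_eq_single i₀]
        · rw [if_pos hi₀A, ← mul_assoc, ← Complex.ofReal_mul,
            mul_inv_cancel₀ (htpos i₀).ne', Complex.ofReal_one, one_mul]
        · intro j _ hj
          rw [if_neg (hi₀uniq j hj), mul_zero]
        · intro h; exact absurd (Finset.mem_univ i₀) h
    · -- pointwise domination
      intro i p
      dsimp only
      by_cases hpA : p.1 ∈ A i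
      · rw [if_pos hpA, ← mul_assoc, ← Complex.ofReal_mul,
          mul_inv_cancel₀ (htpos i).ne', Complex.ofReal_one, one_mul]
      · rw [if_neg hpA, mul_zero, norm_zero]
        exact norm_nonneg _
    · -- total mass bound
      calc ∑ i, t i ≤ ∑ _i : Fin N, Cτ := Finset.sum_le_sum (fun i _ => htle i)
        _ = N * Cτ := by
            rw [Finset.sum_const, Finset.card_univ, Fintype.card_fin, nsmul_eq_mul]
        _ ≤ N * Cτ + 1 := le_add_of_nonneg_right zero_le_one

/-- If `f = Σ λ_k a_k` a.e. on `D` with `(λ_k) ∈ ℓ¹` and `T^{1,q}(γ)` `β`-atoms `a_k`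
(`β > 1`), then for every `α > 1` it also has a decomposition `f = Σ μ_k b_k` a.e. into
`T^{1,q}(γ)` `α`-atoms with `Σ|μ_k| ≤ C Σ|λ_k|`, `C` depending only on `α`, `β`, `q`, `n`. -/
theorem stmt14 (n : ℕ) (hn : 1 ≤ n) (q : ℝ) (hq : 1 < q)
    (β : ℝ) (hβ : 1 < β) (α : ℝ) (hα : 1 < α) :
    ∃ C : ℝ, 0 < C ∧
      ∀ f : E n × ℝ → ℂ, Measurable f →
        ∀ (lam : ℕ → ℂ) (a : ℕ → E n × ℝ → ℂ),
          Summable (fun k => ‖lam k‖) →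
          (∀ k, IsTAtom n q β (a k)) →
          (∀ᵐ p ∂(DMeasure n), HasSum (fun k => lam k * a k p) (f p)) →
          ∃ (mu : ℕ → ℂ) (b : ℕ → E n × ℝ → ℂ),
            Summable (fun k => ‖mu k‖) ∧
            (∀ k, IsTAtom n q α (b k)) ∧
            (∀ᵐ p ∂(DMeasure n), HasSum (fun k => mu k * b k p) (f p)) ∧
            ∑' k, ‖mu k‖ ≤ C * ∑' k, ‖lam k‖ := by
  obtain ⟨N, C₀, hN, hC₀, hdec⟩ := atom_decomp n hn q hq β hβ α hα
  refine ⟨C₀, by linarith, ?_⟩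
  intro f hf lam a hlam hatoms hae
  choose μf bf hμ0 hbatom hbsum hble hbC using fun k => hdec (a k) (hatoms k)
  haveI hne : Nonempty (Fin N) := ⟨⟨0, hN⟩⟩
  haveI hinf : Infinite (ℕ × Fin N) := by infer_instance
  letI : Denumerable (ℕ × Fin N) := Denumerable.ofEncodableOfInfinite _
  set e : ℕ ≃ ℕ × Fin N := (Denumerable.eqv (ℕ × Fin N)).symm with he
  set mu : ℕ → ℂ := fun k => lam (e k).1 * ((μf (e k).1 (e k).2 : ℝ) : ℂ) with hmu
  set b : ℕ → E n × ℝ → ℂ := fun k => bf (e k).1 (e k).2 with hb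
  set F : ℕ × Fin N → ℝ := fun ki => ‖lam ki.1‖ * μf ki.1 ki.2 with hF
  have hFnonneg : ∀ ki, 0 ≤ F ki := fun ki => mul_nonneg (norm_nonneg _) (hμ0 _ _)
  have hFfiber : ∀ k, Summable fun j => F (k, j) := fun k => Summable.of_finite
  have hFsum_fiber : ∀ k, ∑' j, F (k, j) = ‖lam k‖ * ∑ j, μf k j := by
    intro k
    rw [tsum_fintype, hF]
    dsimp only
    rw [← Finset.mul_sum]
  have hfible : ∀ k, ∑' j, F (k, j) ≤ C₀ * ‖lam k‖ := by
    intro k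
    rw [hFsum_fiber k, mul_comm C₀ _]
    exact mul_le_mul_of_nonneg_left (hbC k) (norm_nonneg _)
  have hfibnonneg : ∀ k, 0 ≤ ∑' j, F (k, j) := fun k =>
    tsum_nonneg (fun j => hFnonneg (k, j))
  have hFsumma : Summable F := by
    refine (summable_prod_of_nonneg hFnonneg).mpr ⟨hFfiber, ?_⟩
    exact Summable.of_nonneg_of_le hfibnonneg hfible (hlam.mul_left C₀)
  have hmunorm : ∀ k, ‖mu k‖ = F (e k) := by
    intro k
    rw [hmu, hF]
    dsimp only
    rw [norm_mul, Complex.norm_real, Real.norm_eq_abs, abs_of_nonneg (hμ0 _ _)]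
  have hmusumm : Summable fun k => ‖mu k‖ := by
    have h1 : Summable (F ∘ e) := (e.summable_iff).mpr hFsumma
    exact h1.congr (fun k => (hmunorm k).symm)
  refine ⟨mu, b, hmusumm, fun k => hbatom _ _, ?_, ?_⟩
  · filter_upwards [hae] with p hp
    have hsummable := hp.summable
    have hnorms : Summable fun k => ‖lam k * a k p‖ := summable_norm_iff.mpr hsummable
    set h : ℕ × Fin N → ℂ := fun ki => lam ki.1 * (μf ki.1 ki.2 : ℂ) * bf ki.1 ki.2 p with hh
    have hfib : ∀ k, HasSum (fun j => h (k, j)) (lam k * a k p) := by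
      intro k
      have h1 := hasSum_fintype (fun j => h (k, j))
      have h2 : ∑ j, h (k, j) = lam k * a k p := by
        rw [hh]
        dsimp only
        calc ∑ j, lam k * (μf k j : ℂ) * bf k j p
            = lam k * ∑ j, (μf k j : ℂ) * bf k j p := by
              rw [Finset.mul_sum]
              exact Finset.sum_congr rfl (fun j _ => by ring)
          _ = lam k * a k p := by rw [hbsum k p]
      rwa [h2] at h1
    have hhnorm_summable : Summable fun ki => ‖h ki‖ := by
      set G : ℕ × Fin N → ℝ := fun ki => ‖lam ki.1‖ * ‖a ki.1 p‖ with hG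
      have hGnonneg : ∀ ki, 0 ≤ G ki := fun ki => mul_nonneg (norm_nonneg _) (norm_nonneg _)
      have hGsumm : Summable G := by
        refine (summable_prod_of_nonneg hGnonneg).mpr ⟨fun k => Summable.of_finite, ?_⟩
        have hGfs : ∀ k, ∑' j : Fin N, G (k, j) = N * ‖lam k * a k p‖ := by
          intro k
          rw [tsum_fintype, hG]
          dsimp only
          rw [Finset.sum_const, Finset.card_univ, Fintype.card_fin, nsmul_eq_mul, norm_mul]
        refine Summable.of_nonneg_of_le (fun k => tsum_nonneg (fun j => hGnonneg (k, j)))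
          (fun k => le_of_eq (hGfs k)) ?_
        exact hnorms.mul_left _
      refine Summable.of_nonneg_of_le (fun ki => norm_nonneg _) ?_ hGsumm
      intro ki
      rw [hh, hG]
      dsimp only
      calc ‖lam ki.1 * (μf ki.1 ki.2 : ℂ) * bf ki.1 ki.2 p‖
          = ‖lam ki.1‖ * ‖(μf ki.1 ki.2 : ℂ) * bf ki.1 ki.2 p‖ := by
            rw [mul_assoc, norm_mul]
        _ ≤ ‖lam ki.1‖ * ‖a ki.1 p‖ :=
            mul_le_mul_of_nonneg_left (hble ki.1 ki.2 p) (norm_nonneg _)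
    have hhsumm : Summable h := hhnorm_summable.of_norm
    have hhhas : HasSum h (∑' ki, h ki) := hhsumm.hasSum
    have hgsum : HasSum (fun k => lam k * a k p) (∑' ki, h ki) := hhhas.prod_fiberwise hfib
    have heq : (∑' ki, h ki) = f p := hgsum.unique hp
    rw [heq] at hhhas
    have hcomp : (fun k => mu k * b k p) = h ∘ e := by
      funext k
      rfl
    rw [hcomp]
    exact (e.hasSum_iff).mpr hhhas
  · have h1 : ∑' k, ‖mu k‖ = ∑' ki, F ki := by
      have h2 : (fun k => ‖mu k‖) = F ∘ e := funext hmunorm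
      rw [h2]
      exact e.tsum_eq F
    rw [h1, Summable.tsum_prod' hFsumma hFfiber]
    have hLHSsumm : Summable fun k => ∑' j, F (k, j) :=
      ((summable_prod_of_nonneg hFnonneg).mp hFsumma).2
    calc ∑' k, ∑' j, F (k, j) ≤ ∑' k, C₀ * ‖lam k‖ :=
          Summable.tsum_le_tsum hfible hLHSsumm (hlam.mul_left C₀)
      _ = C₀ * ∑' k, ‖lam k‖ := tsum_mul_left
end
end

section
/- Let 1 < q < ∞, α₀ > 0 and α > 1, and let a be a T^{1,q}(γ) α₀-atom. Set D̃ := {(y,t) ∈ ℝⁿ × (0,∞) : (y, t/α) ∈ D} and ã(y,t) := a(y, t/α). Then ∫_{ℝⁿ} ( ∬_{D̃} 1_{B(y,t)}(x) · γ(B(y,t))^{−1} · |ã(y,t)|^q dγ(y) dt/t )^{1/q} dγ(x) ≤ C, where C is a constant depending only on α₀, α, q and the dimension n. -/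
open MeasureTheory Metric Set
open scoped ENNReal

noncomputable section

section AuxLemmas

lemma measurable_mFun {n : ℕ} : Measurable (mFun (n := n)) :=
  Measurable.ite (measurableSet_le measurable_norm measurable_const) measurable_const
    measurable_norm.inv

lemma measurableSet_Dset (n : ℕ) : MeasurableSet (Dset n) :=
  (measurableSet_lt measurable_const measurable_snd).inter
    (measurableSet_lt measurable_snd (measurable_mFun.comp measurable_fst))

lemma tMeasure_map_mul {c : ℝ} (hc : 0 < c) :
    tMeasure.map (fun t => c * t) = tMeasure := by
  have hmc : Measurable fun t : ℝ => c * t := measurable_const_mul c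
  ext A hA
  have hpre : MeasurableSet ((fun t => c * t) ⁻¹' A) := hmc hA
  rw [Measure.map_apply hmc hA]
  simp only [tMeasure]
  rw [withDensity_apply _ hpre, withDensity_apply _ hA,
    Measure.restrict_restrict hpre, Measure.restrict_restrict hA]
  set G : ℝ → ℝ≥0∞ := (A ∩ Set.Ioi 0).indicator (fun t => ENNReal.ofReal t⁻¹) with hG
  have hGm : Measurable G := by
    exact (ENNReal.measurable_ofReal.comp measurable_inv).indicator
      (hA.inter measurableSet_Ioi)
  have key : ∀ t : ℝ, ((fun t => c * t) ⁻¹' A ∩ Set.Ioi 0).indicator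
      (fun t => ENNReal.ofReal t⁻¹) t = ENNReal.ofReal c * G (c * t) := by
    intro t
    by_cases ht : c * t ∈ A ∩ Set.Ioi 0
    · have ht2 : (0:ℝ) < t := by
        have h2 := ht.2
        simp only [Set.mem_Ioi] at h2
        nlinarith
      have ht' : t ∈ (fun t => c * t) ⁻¹' A ∩ Set.Ioi 0 := ⟨ht.1, ht2⟩
      rw [Set.indicator_of_mem ht', hG, Set.indicator_of_mem ht,
        ← ENNReal.ofReal_mul hc.le, mul_inv, mul_inv_cancel_left₀ hc.ne']
    · have ht' : t ∉ (fun t => c * t) ⁻¹' A ∩ Set.Ioi 0 := by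
        rintro ⟨h1, h2⟩
        simp only [Set.mem_Ioi] at h2
        exact ht ⟨h1, Set.mem_Ioi.mpr (mul_pos hc h2)⟩
      rw [Set.indicator_of_notMem ht', hG, Set.indicator_of_notMem ht, mul_zero]
  calc ∫⁻ t in (fun t => c * t) ⁻¹' A ∩ Set.Ioi 0, ENNReal.ofReal t⁻¹ ∂volume
      = ∫⁻ t, ((fun t => c * t) ⁻¹' A ∩ Set.Ioi 0).indicator
          (fun t => ENNReal.ofReal t⁻¹) t ∂volume :=
        (lintegral_indicator (hpre.inter measurableSet_Ioi) _).symm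
    _ = ∫⁻ t, ENNReal.ofReal c * G (c * t) ∂volume := lintegral_congr key
    _ = ENNReal.ofReal c * ∫⁻ t, G (c * t) ∂volume :=
        lintegral_const_mul _ (hGm.comp hmc)
    _ = ENNReal.ofReal c * ∫⁻ t, G t ∂(volume.map (fun t => c * t)) := by
        rw [lintegral_map hGm hmc]
    _ = ENNReal.ofReal c * (ENNReal.ofReal c⁻¹ * ∫⁻ t, G t ∂volume) := by
        rw [Real.map_volume_mul_left hc.ne', lintegral_smul_measure,
          abs_of_pos (inv_pos.mpr hc), smul_eq_mul]
    _ = ∫⁻ t, G t ∂volume := by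
        rw [← mul_assoc, ← ENNReal.ofReal_mul hc.le, mul_inv_cancel₀ hc.ne',
          ENNReal.ofReal_one, one_mul]
    _ = ∫⁻ t in A ∩ Set.Ioi 0, ENNReal.ofReal t⁻¹ ∂volume :=
        lintegral_indicator (hA.inter measurableSet_Ioi) _

lemma gaussianM_ball_le {n : ℕ} (c : E n) {s b : ℝ}
    (hb : ∀ y ∈ ball c s, (2 * Real.pi) ^ (-(n : ℝ) / 2) * Real.exp (-‖y‖ ^ 2 / 2) ≤ b) :
    gaussianM n (ball c s) ≤ ENNReal.ofReal b * volume (ball c s) := by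
  rw [gaussianM, withDensity_apply _ measurableSet_ball]
  calc ∫⁻ y in ball c s,
        ENNReal.ofReal ((2 * Real.pi) ^ (-(n : ℝ) / 2) * Real.exp (-‖y‖ ^ 2 / 2)) ∂volume
      ≤ ∫⁻ _ in ball c s, ENNReal.ofReal b ∂volume :=
        setLIntegral_mono' measurableSet_ball fun y hy =>
          ENNReal.ofReal_le_ofReal (hb y hy)
    _ = ENNReal.ofReal b * volume (ball c s) := setLIntegral_const _ _

lemma gaussianM_ball_ge {n : ℕ} (c : E n) {s b : ℝ}
    (hb : ∀ y ∈ ball c s, b ≤ (2 * Real.pi) ^ (-(n : ℝ) / 2) * Real.exp (-‖y‖ ^ 2 / 2)) :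
    ENNReal.ofReal b * volume (ball c s) ≤ gaussianM n (ball c s) := by
  rw [gaussianM, withDensity_apply _ measurableSet_ball]
  calc ENNReal.ofReal b * volume (ball c s)
      = ∫⁻ _ in ball c s, ENNReal.ofReal b ∂volume := (setLIntegral_const _ _).symm
    _ ≤ ∫⁻ y in ball c s,
        ENNReal.ofReal ((2 * Real.pi) ^ (-(n : ℝ) / 2) * Real.exp (-‖y‖ ^ 2 / 2)) ∂volume :=
        setLIntegral_mono' measurableSet_ball fun y hy =>
          ENNReal.ofReal_le_ofReal (hb y hy)

end AuxLemmas

set_option maxHeartbeats 2000000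

/-- If `a` is a `T^{1,q}(γ)` `α₀`-atom and `α > 1`, then with
`D̃ = {(y,t) : (y, t/α) ∈ D}` and `ã(y,t) = a(y, t/α)` one has
`∫_{ℝⁿ} (∬_{D̃} 1_{B(y,t)}(x) γ(B(y,t))⁻¹ |ã(y,t)|^q dγ(y) dt/t)^{1/q} dγ(x) ≤ C`, where
`C` depends only on `α₀`, `α`, `q` and `n`. -/
theorem stmt17 (n : ℕ) (hn : 1 ≤ n) (q : ℝ) (hq : 1 < q)
    (α₀ α : ℝ) (hα₀ : 0 < α₀) (hα : 1 < α) :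
    ∃ C : ℝ, 0 < C ∧
      ∀ a : E n × ℝ → ℂ, IsTAtom n q α₀ a →
        ∫⁻ x, (∫⁻ p in {p : E n × ℝ | (p.1, p.2 / α) ∈ Dset n},
            (ball p.1 p.2).indicator (fun _ => (gaussianM n (ball p.1 p.2))⁻¹) x *
            (‖a (p.1, p.2 / α)‖₊ : ℝ≥0∞) ^ q
            ∂((gaussianM n).prod tMeasure)) ^ (1 / q) ∂(gaussianM n) ≤
          ENNReal.ofReal C := by
  classical
  have hα0 : (0:ℝ) < α := lt_trans one_pos hα
  have hq0 : (0:ℝ) < q := lt_trans one_pos hq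
  have h1q : 1/q ≤ 1 := by rw [div_le_one hq0]; linarith
  have he0 : (0:ℝ) ≤ 1 - 1/q := by linarith
  set l : ℝ := 1 + 2*α with hl
  have hl1 : (1:ℝ) ≤ l := by nlinarith
  set M : ℝ := 2*l*α₀ + 2*l^2*α₀^2 with hM
  have hM0 : (0:ℝ) ≤ M := by nlinarith
  refine ⟨Real.exp M * l ^ n, by positivity, ?_⟩
  rintro a ⟨ham, c, r, hr0, hrm, hsupp, hnorm⟩
  -- basic instances
  haveI hsfg : SFinite (gaussianM n) := by rw [gaussianM]; infer_instance
  haveI hsft : SFinite tMeasure := by rw [tMeasure]; infer_instance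
  haveI : Nontrivial (E n) := by
    refine ⟨0, EuclideanSpace.single (⟨0, hn⟩ : Fin n) (1:ℝ), fun h => ?_⟩
    have h2 := congrArg norm h
    rw [norm_zero, EuclideanSpace.norm_single] at h2
    norm_num at h2
  -- degenerate case r = 0
  rcases hr0.eq_or_lt with hr | hr
  · have ha0 : ∀ p : E n × ℝ, a p = 0 := by
      intro p
      apply hsupp
      rintro ⟨⟨hp1, hp2⟩, -⟩
      rw [← hr, ball_zero] at hp2
      simp only [Set.compl_empty] at hp2
      rw [Metric.infDist_zero_of_mem (Set.mem_univ _), one_mul] at hp2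
      linarith
    simp only [ha0, nnnorm_zero, ENNReal.coe_zero, ENNReal.zero_rpow_of_pos hq0, mul_zero,
      lintegral_zero, ENNReal.zero_rpow_of_pos (by positivity : (0:ℝ) < 1/q)]
    exact zero_le
  -- main case 0 < r
  set R : ℝ := l * r with hRdef
  have hR : 0 < R := by nlinarith
  have hrR : r ≤ R := by nlinarith
  -- admissibility consequences
  have hmc1 : mFun c * ‖c‖ ≤ 1 := by
    rw [mFun]; split_ifs with h
    · simpa using h
    · push_neg at h
      rw [inv_mul_cancel₀ (ne_of_gt (by linarith : (0:ℝ) < ‖c‖))]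
  have hmle1 : mFun c ≤ 1 := by
    rw [mFun]; split_ifs with h
    · exact le_refl 1
    · push_neg at h
      exact inv_le_one_of_one_le₀ h.le
  have hrc : r * ‖c‖ ≤ α₀ := by
    calc r * ‖c‖ ≤ (α₀ * mFun c) * ‖c‖ := mul_le_mul_of_nonneg_right hrm (norm_nonneg c)
      _ = α₀ * (mFun c * ‖c‖) := by ring
      _ ≤ α₀ * 1 := mul_le_mul_of_nonneg_left hmc1 hα₀.le
      _ = α₀ := mul_one _
  have hra : r ≤ α₀ := by nlinarith [hrm, hα₀.le]
  have hRc : R * ‖c‖ ≤ l * α₀ := by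
    rw [hRdef, mul_assoc]; exact mul_le_mul_of_nonneg_left hrc (by linarith)
  have hRa : R ≤ l * α₀ := by
    rw [hRdef]; exact mul_le_mul_of_nonneg_left hra (by linarith)
  -- gaussian ball bounds
  set A0 : ℝ := (2*Real.pi) ^ (-(n:ℝ)/2) with hA0def
  have hA0 : 0 < A0 := Real.rpow_pos_of_pos (by positivity) _
  set Uu : ℝ := A0 * Real.exp (-(max (‖c‖ - R) 0)^2/2) with hUu
  set L : ℝ := A0 * Real.exp (-(‖c‖ + R)^2/2) with hL
  have hLpos : 0 < L := by positivity
  have hub : gaussianM n (ball c R) ≤ ENNReal.ofReal Uu * volume (ball c R) := by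
    apply gaussianM_ball_le
    intro y hy
    have hd : ‖c‖ - ‖y‖ ≤ dist y c := by
      rw [dist_comm, dist_eq_norm]; exact norm_sub_norm_le c y
    have h1 : max (‖c‖ - R) 0 ≤ ‖y‖ := by
      apply max_le _ (norm_nonneg y)
      have := mem_ball.mp hy
      linarith
    have h2 : (max (‖c‖ - R) 0)^2 ≤ ‖y‖^2 :=
      pow_le_pow_left₀ (le_max_right _ 0) h1 2
    have h3 := Real.exp_le_exp.mpr (by linarith : -‖y‖^2/2 ≤ -(max (‖c‖ - R) 0)^2/2)
    exact mul_le_mul_of_nonneg_left h3 hA0.le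
  have hlb : ENNReal.ofReal L * volume (ball c r) ≤ gaussianM n (ball c r) := by
    apply gaussianM_ball_ge
    intro y hy
    have hd : ‖y‖ - ‖c‖ ≤ dist y c := by
      rw [dist_eq_norm]; exact norm_sub_norm_le y c
    have h1 : ‖y‖ ≤ ‖c‖ + R := by
      have := mem_ball.mp hy; linarith
    have h2 : ‖y‖^2 ≤ (‖c‖ + R)^2 := pow_le_pow_left₀ (norm_nonneg y) h1 2
    have h3 := Real.exp_le_exp.mpr (by linarith : -(‖c‖ + R)^2/2 ≤ -‖y‖^2/2)
    exact mul_le_mul_of_nonneg_left h3 hA0.le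
  have hexp : -(max (‖c‖ - R) 0)^2/2 ≤ M - (‖c‖ + R)^2/2 := by
    rcases le_or_gt 0 (‖c‖ - R) with h | h
    · rw [max_eq_left h]
      have e1 : (‖c‖+R)^2 - (‖c‖-R)^2 = 4*(R*‖c‖) := by ring
      have e2 : (0:ℝ) ≤ 2*l^2*α₀^2 := by positivity
      linarith [hRc, e1, e2, hM]
    · rw [max_eq_right (by linarith : ‖c‖ - R ≤ 0)]
      have h2 : ‖c‖ + R ≤ 2*(l*α₀) := by linarith
      have h3 : (‖c‖ + R)^2 ≤ (2*(l*α₀))^2 :=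
        pow_le_pow_left₀ (add_nonneg (norm_nonneg c) hR.le) h2 2
      have e3 : (2*(l*α₀))^2 = 2*(2*l^2*α₀^2) := by ring
      have e4 : (0:ℝ) ≤ 2*l*α₀ := by positivity
      have e0 : (0:ℝ)^2 = 0 := by norm_num
      linarith [h3, e3, e4, e0, hM]
  have hUle : Uu ≤ Real.exp M * L := by
    have h1 : Real.exp (-(max (‖c‖ - R) 0)^2/2)
        ≤ Real.exp M * Real.exp (-(‖c‖ + R)^2/2) := by
      rw [← Real.exp_add]
      exact Real.exp_le_exp.mpr (by linarith)
    calc Uu = A0 * Real.exp (-(max (‖c‖ - R) 0)^2/2) := hUu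
      _ ≤ A0 * (Real.exp M * Real.exp (-(‖c‖ + R)^2/2)) := mul_le_mul_of_nonneg_left h1 hA0.le
      _ = Real.exp M * L := by rw [hL]; ring
  have hvol : volume (ball c R) = ENNReal.ofReal (l^n) * volume (ball c r) := by
    have h1 := Measure.addHaar_ball_mul (volume : Measure (E n)) c (by linarith : (0:ℝ) ≤ l) r
    have h2 := Measure.addHaar_ball_center (volume : Measure (E n)) c r
    rw [hRdef, h1, h2, finrank_euclideanSpace_fin]
  have hdoub : gaussianM n (ball c R) ≤
      ENNReal.ofReal (Real.exp M * l^n) * gaussianM n (ball c r) := by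
    have hln : (0:ℝ) ≤ l^n := by positivity
    have hUu0 : (0:ℝ) ≤ Uu := by rw [hUu]; positivity
    have hEln0 : (0:ℝ) ≤ Real.exp M * l^n := by positivity
    calc gaussianM n (ball c R) ≤ ENNReal.ofReal Uu * volume (ball c R) := hub
      _ = ENNReal.ofReal Uu * ENNReal.ofReal (l^n) * volume (ball c r) := by
          rw [hvol, mul_assoc]
      _ = ENNReal.ofReal (Uu * l^n) * volume (ball c r) := by
          rw [← ENNReal.ofReal_mul hUu0]
      _ ≤ ENNReal.ofReal (Real.exp M * l^n * L) * volume (ball c r) := by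
          apply mul_le_mul_left
          apply ENNReal.ofReal_le_ofReal
          calc Uu * l^n ≤ (Real.exp M * L) * l^n := mul_le_mul_of_nonneg_right hUle hln
            _ = Real.exp M * l^n * L := by ring
      _ = ENNReal.ofReal (Real.exp M * l^n) * (ENNReal.ofReal L * volume (ball c r)) := by
          rw [show Real.exp M * l^n * L = (Real.exp M * l^n) * L by ring,
            ENNReal.ofReal_mul hEln0, mul_assoc]
      _ ≤ ENNReal.ofReal (Real.exp M * l^n) * gaussianM n (ball c r) :=
          mul_le_mul_right hlb _
  have hγpos : gaussianM n (ball c r) ≠ 0 := by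
    refine fun h0 => absurd (le_trans hlb (le_of_eq h0)) ?_
    simp only [nonpos_iff_eq_zero, mul_eq_zero, not_or]
    exact ⟨fun h => by simp [ENNReal.ofReal_eq_zero] at h; linarith,
      (measure_ball_pos volume c hr).ne'⟩
  have hγfin : gaussianM n (ball c r) ≠ ⊤ := by
    have hle : gaussianM n (ball c r) ≤ ENNReal.ofReal A0 * volume (ball c r) := by
      apply gaussianM_ball_le
      intro y _
      rw [hA0def]
      have h1 : Real.exp (-‖y‖ ^ 2 / 2) ≤ 1 := Real.exp_le_one_iff.mpr (by nlinarith [sq_nonneg ‖y‖])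
      calc (2 * Real.pi) ^ (-(n:ℝ) / 2) * Real.exp (-‖y‖ ^ 2 / 2)
          ≤ (2 * Real.pi) ^ (-(n:ℝ) / 2) * 1 := mul_le_mul_of_nonneg_left h1 hA0.le
        _ = (2 * Real.pi) ^ (-(n:ℝ) / 2) := mul_one _
    exact ne_top_of_le_ne_top
      (ENNReal.mul_ne_top ENNReal.ofReal_ne_top measure_ball_lt_top.ne) hle
  -- notation
  set μp := (gaussianM n).prod tMeasure with hμp
  set S' : Set (E n × ℝ) := {p : E n × ℝ | (p.1, p.2 / α) ∈ Dset n} with hS'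
  set F : E n → ℝ≥0∞ := fun x => ∫⁻ p in S',
      (ball p.1 p.2).indicator (fun _ => (gaussianM n (ball p.1 p.2))⁻¹) x *
      (‖a (p.1, p.2 / α)‖₊ : ℝ≥0∞) ^ q ∂μp with hFdef
  -- measurability facts
  have hψ : Measurable (fun p : E n × ℝ => (p.1, p.2 / α)) :=
    measurable_fst.prodMk (measurable_snd.div_const α)
  have hSm : MeasurableSet S' := (measurableSet_Dset n).preimage hψ
  have hγmeas : Measurable fun p : E n × ℝ => gaussianM n (ball p.1 p.2) := by
    have hs : MeasurableSet {z : (E n × ℝ) × E n | dist z.2 z.1.1 < z.1.2} :=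
      measurableSet_lt (continuous_snd.dist continuous_fst.fst).measurable
        continuous_fst.snd.measurable
    exact measurable_measure_prodMk_left hs
  have hwa : Measurable fun p : E n × ℝ => (‖a p‖₊ : ℝ≥0∞) ^ q :=
    ENNReal.continuous_rpow_const.measurable.comp ham.enorm
  have hw : Measurable fun p : E n × ℝ => (‖a (p.1, p.2 / α)‖₊ : ℝ≥0∞) ^ q := hwa.comp hψ
  have hh : Measurable fun z : E n × (E n × ℝ) =>
      (ball z.2.1 z.2.2).indicator (fun _ => (gaussianM n (ball z.2.1 z.2.2))⁻¹) z.1 *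
      (‖a (z.2.1, z.2.2 / α)‖₊ : ℝ≥0∞) ^ q := by
    have heq : (fun z : E n × (E n × ℝ) =>
        (ball z.2.1 z.2.2).indicator (fun _ => (gaussianM n (ball z.2.1 z.2.2))⁻¹) z.1)
        = {z : E n × (E n × ℝ) | dist z.1 z.2.1 < z.2.2}.indicator
          (fun z => (gaussianM n (ball z.2.1 z.2.2))⁻¹) := by
      funext z
      simp only [Set.indicator_apply, Set.mem_setOf_eq, mem_ball]
    refine Measurable.mul ?_ (hw.comp measurable_snd)
    rw [heq]
    exact ((hγmeas.comp measurable_snd).inv).indicator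
      (measurableSet_lt (continuous_fst.dist continuous_snd.fst).measurable
        continuous_snd.snd.measurable)
  have hFm : Measurable F := hh.lintegral_prod_right'
  -- support of F
  have hsupp' : ∀ x : E n, x ∉ ball c R → F x = 0 := by
    intro x hx
    rw [hFdef]
    rw [show (0:ℝ≥0∞) = ∫⁻ _ in S', 0 ∂μp by rw [lintegral_zero]]
    refine lintegral_congr fun p => ?_
    by_cases haz : a (p.1, p.2 / α) = 0
    · rw [haz]
      simp [ENNReal.zero_rpow_of_pos hq0]
    · have hmem : (p.1, p.2 / α) ∈ tentSet n 1 (ball c r) ∩ Dset n := by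
        by_contra hmem
        exact haz (hsupp _ hmem)
      obtain ⟨⟨htpos, htinf⟩, -⟩ := hmem
      simp only at htpos htinf
      rw [one_mul] at htinf
      have hp2 : 0 < p.2 := by
        have h2 := mul_pos hα0 htpos
        rw [mul_div_cancel₀ _ hα0.ne'] at h2
        exact h2
      have hy : p.1 ∈ ball c r := by
        by_contra hyc
        rw [Metric.infDist_zero_of_mem (Set.mem_compl hyc)] at htinf
        have : 0 < p.2 / α := htpos
        linarith
      set u : E n := EuclideanSpace.single (⟨0, hn⟩ : Fin n) (1:ℝ) with hu
      have hun : ‖u‖ = 1 := by rw [hu, EuclideanSpace.norm_single]; norm_num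
      have hwmem : c + r • u ∈ (ball c r)ᶜ := by
        simp only [Set.mem_compl_iff, mem_ball, not_lt, dist_eq_norm, add_sub_cancel_left,
          norm_smul, hun, Real.norm_eq_abs, abs_of_pos hr, mul_one, le_refl]
      have hinf_le : infDist p.1 (ball c r)ᶜ ≤ dist p.1 (c + r • u) :=
        infDist_le_dist_of_mem hwmem
      have hdc : dist c (c + r • u) = r := by
        rw [dist_eq_norm]
        simp [sub_add_cancel_left, norm_smul, hun, abs_of_pos hr]
      have hd2 : dist p.1 (c + r • u) < 2*r := by
        calc dist p.1 (c + r • u) ≤ dist p.1 c + dist c (c + r • u) := dist_triangle _ _ _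
          _ < r + r := by
              have h1 : dist p.1 c < r := mem_ball.mp hy
              linarith [hdc.le, hdc.ge]
          _ = 2*r := by ring
      have hp2lt : p.2 < 2*α*r := by
        have h5 : p.2 / α < 2*r := lt_of_le_of_lt (le_trans htinf hinf_le) hd2
        have h6 : p.2 = α * (p.2 / α) := by field_simp
        calc p.2 = α * (p.2 / α) := h6
          _ < α * (2*r) := mul_lt_mul_of_pos_left h5 hα0
          _ = 2*α*r := by ring
      have hxnot : x ∉ ball p.1 p.2 := by
        intro hxb
        apply hx
        rw [mem_ball]
        calc dist x c ≤ dist x p.1 + dist p.1 c := dist_triangle _ _ _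
          _ < p.2 + r := add_lt_add (mem_ball.mp hxb) (mem_ball.mp hy)
          _ < 2*α*r + r := by linarith
          _ ≤ R := by rw [hRdef, hl]; nlinarith
      rw [Set.indicator_of_notMem hxnot, zero_mul]
  -- reduce to ball
  have hLHS1 : ∫⁻ x, F x ^ (1/q) ∂gaussianM n = ∫⁻ x in ball c R, F x ^ (1/q) ∂gaussianM n := by
    rw [← lintegral_indicator measurableSet_ball]
    refine lintegral_congr fun x => ?_
    by_cases hx : x ∈ ball c R
    · rw [Set.indicator_of_mem hx]
    · rw [Set.indicator_of_notMem hx, hsupp' x hx,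
        ENNReal.zero_rpow_of_pos (by positivity : (0:ℝ) < 1/q)]
  -- Hölder
  have hconj : q.HolderConjugate (Real.conjExponent q) := Real.HolderConjugate.conjExponent hq
  have hq' : 1 / Real.conjExponent q = 1 - 1/q := by
    rw [Real.conjExponent]
    have h2 : q - 1 ≠ 0 := by linarith
    field_simp
  have hrwpow : ∀ y : ℝ≥0∞, (y ^ (1/q)) ^ q = y := fun y => by
    rw [← ENNReal.rpow_mul, one_div_mul_cancel hq0.ne', ENNReal.rpow_one]
  have hH : ∫⁻ x in ball c R, F x ^ (1/q) ∂gaussianM n ≤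
      (∫⁻ x in ball c R, F x ∂gaussianM n) ^ (1/q) *
      (gaussianM n (ball c R)) ^ (1 - 1/q) := by
    have h := ENNReal.lintegral_mul_le_Lp_mul_Lq ((gaussianM n).restrict (ball c R)) hconj
      (ENNReal.continuous_rpow_const.measurable.comp hFm).aemeasurable
      aemeasurable_const (f := fun x => F x ^ (1/q)) (g := fun _ => 1)
    simp only [Pi.mul_apply, mul_one, ENNReal.one_rpow, lintegral_one,
      Measure.restrict_apply_univ, hrwpow, hq'] at h
    exact h
  -- Tonelli and cancellation
  have hle1 : ∀ y : ℝ≥0∞, y⁻¹ * y ≤ 1 := fun y => by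
    rcases eq_or_ne y 0 with rfl | h0
    · simp
    · rcases eq_or_ne y ⊤ with rfl | ht
      · simp
      · rw [ENNReal.inv_mul_cancel h0 ht]
  have hmap : μp.map (fun p : E n × ℝ => (p.1, p.2 / α)) = μp := by
    have hfun : (fun p : E n × ℝ => (p.1, p.2 / α))
        = Prod.map (id : E n → E n) (fun t : ℝ => α⁻¹ * t) := by
      funext p
      simp [Prod.map, div_eq_inv_mul]
    rw [hμp, hfun, ← Measure.map_prod_map _ _ measurable_id (measurable_const_mul α⁻¹),
      Measure.map_id, tMeasure_map_mul (inv_pos.mpr hα0)]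
  have hT : ∫⁻ x in ball c R, F x ∂gaussianM n ≤
      ∫⁻ p, (‖a p‖₊ : ℝ≥0∞) ^ q ∂(DMeasure n) := by
    calc ∫⁻ x in ball c R, F x ∂gaussianM n ≤ ∫⁻ x, F x ∂gaussianM n :=
          setLIntegral_le_lintegral _ _
      _ = ∫⁻ p, ∫⁻ x, (ball p.1 p.2).indicator
            (fun _ => (gaussianM n (ball p.1 p.2))⁻¹) x *
            (‖a (p.1, p.2 / α)‖₊ : ℝ≥0∞) ^ q ∂gaussianM n ∂(μp.restrict S') :=
          lintegral_lintegral_swap hh.aemeasurable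
      _ ≤ ∫⁻ p, (‖a (p.1, p.2 / α)‖₊ : ℝ≥0∞) ^ q ∂(μp.restrict S') := by
          refine lintegral_mono fun p => ?_
          have hi : Measurable fun x : E n => (ball p.1 p.2).indicator
              (fun _ => (gaussianM n (ball p.1 p.2))⁻¹) x :=
            measurable_const.indicator measurableSet_ball
          rw [lintegral_mul_const _ hi, lintegral_indicator measurableSet_ball,
            setLIntegral_const]
          calc (gaussianM n (ball p.1 p.2))⁻¹ * gaussianM n (ball p.1 p.2) *
                (‖a (p.1, p.2 / α)‖₊ : ℝ≥0∞) ^ q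
              ≤ 1 * (‖a (p.1, p.2 / α)‖₊ : ℝ≥0∞) ^ q := mul_le_mul_left (hle1 _) _
            _ = (‖a (p.1, p.2 / α)‖₊ : ℝ≥0∞) ^ q := one_mul _
      _ = ∫⁻ p in Dset n, (‖a p‖₊ : ℝ≥0∞) ^ q ∂μp := by
          have h2 := setLIntegral_map (μ := μp) (measurableSet_Dset n) hwa hψ
          rw [hmap] at h2
          exact h2.symm
      _ = ∫⁻ p, (‖a p‖₊ : ℝ≥0∞) ^ q ∂(DMeasure n) := rfl
  -- atom bound
  have hatom : ∫⁻ p, (‖a p‖₊ : ℝ≥0∞) ^ q ∂(DMeasure n) ≤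
      gaussianM n (ball c r) ^ (-(q-1)) := by
    have h2 := ENNReal.rpow_le_rpow hnorm hq0.le
    rw [← ENNReal.rpow_mul, ← ENNReal.rpow_mul, one_div_mul_cancel hq0.ne',
      ENNReal.rpow_one] at h2
    rw [show -(1 - 1/q) * q = -(q-1) by field_simp] at h2
    exact h2
  -- assembly
  set K : ℝ≥0∞ := ENNReal.ofReal (Real.exp M * l^n) with hK
  have hK1 : (1:ℝ≥0∞) ≤ K := by
    rw [hK, ENNReal.one_le_ofReal]
    nlinarith [Real.one_le_exp hM0, one_le_pow₀ hl1 (n := n)]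
  show ∫⁻ x, F x ^ (1/q) ∂gaussianM n ≤ ENNReal.ofReal (Real.exp M * l ^ n)
  calc ∫⁻ x, F x ^ (1/q) ∂gaussianM n
      = ∫⁻ x in ball c R, F x ^ (1/q) ∂gaussianM n := hLHS1
    _ ≤ (∫⁻ x in ball c R, F x ∂gaussianM n) ^ (1/q) *
        (gaussianM n (ball c R)) ^ (1 - 1/q) := hH
    _ ≤ (gaussianM n (ball c r) ^ (-(q-1))) ^ (1/q) *
        (K * gaussianM n (ball c r)) ^ (1 - 1/q) :=
        mul_le_mul' (ENNReal.rpow_le_rpow (le_trans hT hatom) (by positivity))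
          (ENNReal.rpow_le_rpow hdoub he0)
    _ = K ^ (1 - 1/q) * (gaussianM n (ball c r) ^ (-(1 - 1/q)) *
        gaussianM n (ball c r) ^ (1 - 1/q)) := by
        rw [← ENNReal.rpow_mul, ENNReal.mul_rpow_of_nonneg _ _ he0,
          show -(q-1) * (1/q) = -(1 - 1/q) by field_simp]
        ring
    _ = K ^ (1 - 1/q) := by
        rw [← ENNReal.rpow_add _ _ hγpos hγfin, neg_add_cancel, ENNReal.rpow_zero, mul_one]
    _ ≤ K := by
        calc K ^ (1 - 1/q) ≤ K ^ (1:ℝ) :=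
              ENNReal.rpow_le_rpow_of_exponent_le hK1 (by have := one_div_pos.mpr hq0; linarith)
          _ = K := ENNReal.rpow_one K
end
end
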